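/- For λ ∈ (0,1), (λ/(1+λ)^{3/2}) ∫₀¹ z/(√(1-z)·√(1-z+λ(1+z))) dz = (λ/(1-λ²)^{3/2})·( log((1+√(1-λ²))/λ) - √(1-λ²) ). -/

import Mathlib

open Real MeasureTheory

set_option maxHeartbeats 1000000 in
theorem stmt_9 (lam : ℝ) (hlam : lam ∈ Set.Ioo 0 1) :
    (lam / (1 + lam) ^ ((3:ℝ)/2)) *
        ∫ z in (0:ℝ)..1, z / (Real.sqrt (1 - z) * Real.sqrt (1 - z + lam * (1 + z))) =
      (lam / (1 - lam ^ 2) ^ ((3:ℝ)/2)) *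
        (Real.log ((1 + Real.sqrt (1 - lam ^ 2)) / lam) - Real.sqrt (1 - lam ^ 2)) := by
  obtain ⟨h0, h1⟩ := hlam
  set sb := Real.sqrt (1 - lam) with hsb_def
  set s2 := Real.sqrt (2 * lam) with hs2_def
  set sa := Real.sqrt (1 + lam) with hsa_def
  have hsb_pos : 0 < sb := Real.sqrt_pos.2 (by linarith)
  have hs2_pos : 0 < s2 := Real.sqrt_pos.2 (by linarith)
  have hsa_pos : 0 < sa := Real.sqrt_pos.2 (by linarith)
  have hsb_sq : sb ^ 2 = 1 - lam := Real.sq_sqrt (by linarith)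
  have hs2_sq : s2 ^ 2 = 2 * lam := Real.sq_sqrt (by linarith)
  have hsa_sq : sa ^ 2 = 1 + lam := Real.sq_sqrt (by linarith)
  set F : ℝ → ℝ := fun z =>
    (1 / (1 - lam)) * (Real.sqrt (1 - z) * Real.sqrt (1 - z + lam * (1 + z)))
      - (2 / ((1 - lam) * sb)) * Real.arsinh (sb * Real.sqrt (1 - z) / s2) with hF
  -- derivative of F on (0,1)
  have hderiv : ∀ x ∈ Set.Ioo (0:ℝ) 1,
      HasDerivAt F (x / (Real.sqrt (1 - x) * Real.sqrt (1 - x + lam * (1 + x)))) x := by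
    intro x hx
    obtain ⟨hx0, hx1⟩ := hx
    set sp := Real.sqrt (1 - x) with hsp_def
    set sq := Real.sqrt (1 - x + lam * (1 + x)) with hsq_def
    have hq_pos' : (0:ℝ) < 1 - x + lam * (1 + x) := by nlinarith
    have hsp_pos : 0 < sp := Real.sqrt_pos.2 (by linarith)
    have hsq_pos : 0 < sq := Real.sqrt_pos.2 hq_pos'
    have hsp_sq : sp ^ 2 = 1 - x := Real.sq_sqrt (by linarith)
    have hsq_sq : sq ^ 2 = 1 - x + lam * (1 + x) := Real.sq_sqrt (le_of_lt hq_pos')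
    have hpi : HasDerivAt (fun z : ℝ => 1 - z) (-1) x := by
      simpa using (hasDerivAt_id x).const_sub 1
    have hp : HasDerivAt (fun z => Real.sqrt (1 - z)) (1 / (2 * sp) * (-1)) x :=
      (Real.hasDerivAt_sqrt (by intro h; linarith [h] : (1:ℝ) - x ≠ 0)).comp x hpi
    have hqi : HasDerivAt (fun z : ℝ => 1 - z + lam * (1 + z)) (-1 + lam * 1) x := by
      exact hpi.add (((hasDerivAt_id x).const_add 1).const_mul lam)
    have hq : HasDerivAt (fun z => Real.sqrt (1 - z + lam * (1 + z)))
        (1 / (2 * sq) * (-1 + lam * 1)) x :=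
      (Real.hasDerivAt_sqrt (ne_of_gt hq_pos')).comp x hqi
    have hg : HasDerivAt (fun z => sb * Real.sqrt (1 - z) / s2)
        (sb * (1 / (2 * sp) * (-1)) / s2) x := (hp.const_mul sb).div_const s2
    have key : Real.sqrt (1 + (sb * sp / s2) ^ 2) = sq / s2 := by
      have h2 : 1 + (sb * sp / s2) ^ 2 = (sq / s2) ^ 2 := by
        rw [div_pow, div_pow, mul_pow, hsb_sq, hsp_sq, hsq_sq, hs2_sq]
        field_simp
        ring
      rw [h2, Real.sqrt_sq (by positivity)]
    have harc : HasDerivAt (fun z => Real.arsinh (sb * Real.sqrt (1 - z) / s2))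
        ((Real.sqrt (1 + (sb * sp / s2) ^ 2))⁻¹ * (sb * (1 / (2 * sp) * (-1)) / s2)) x :=
      (Real.hasDerivAt_arsinh _).comp x hg
    have hFd : HasDerivAt F
        ((1 / (1 - lam)) * ((1 / (2 * sp) * (-1)) * sq + sp * (1 / (2 * sq) * (-1 + lam * 1)))
          - (2 / ((1 - lam) * sb)) *
            ((Real.sqrt (1 + (sb * sp / s2) ^ 2))⁻¹ * (sb * (1 / (2 * sp) * (-1)) / s2))) x :=
      ((hp.mul hq).const_mul _).sub (harc.const_mul _)
    have heq : ((1 / (1 - lam)) * ((1 / (2 * sp) * (-1)) * sq + sp * (1 / (2 * sq) * (-1 + lam * 1)))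
          - (2 / ((1 - lam) * sb)) *
            ((Real.sqrt (1 + (sb * sp / s2) ^ 2))⁻¹ * (sb * (1 / (2 * sp) * (-1)) / s2)))
        = x / (sp * sq) := by
      rw [key]
      have h1l : (1:ℝ) - lam ≠ 0 := by intro h; linarith [h]
      have e1 : (sq / s2)⁻¹ * (sb * (1 / (2 * sp) * (-1)) / s2) = -(sb / (2 * (sp * sq))) := by
        field_simp
      rw [e1]
      field_simp
      ring_nf
      linear_combination (-(1-lam)) * hsp_sq - hsq_sq
    rw [heq] at hFd
    exact hFd
  -- integrability
  have hcont_aux : ContinuousOn (fun z : ℝ => z / Real.sqrt (1 - z + lam * (1 + z)))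
      (Set.uIcc (0:ℝ) 1) := by
    apply ContinuousOn.div continuousOn_id
    · exact (Real.continuous_sqrt.comp (by continuity)).continuousOn
    · intro z hz
      rw [Set.uIcc_of_le (by norm_num)] at hz
      have : (0:ℝ) < 1 - z + lam * (1 + z) := by nlinarith [hz.1, hz.2]
      exact ne_of_gt (Real.sqrt_pos.2 this)
  have hint : IntervalIntegrable
      (fun z => z / (Real.sqrt (1 - z) * Real.sqrt (1 - z + lam * (1 + z)))) volume 0 1 := by
    have hbase : IntervalIntegrable (fun x : ℝ => x ^ (-(1/2) : ℝ)) volume 0 1 :=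
      intervalIntegral.intervalIntegrable_rpow' (by norm_num)
    have hcomp : IntervalIntegrable (fun x : ℝ => (1 - x) ^ (-(1/2) : ℝ)) volume 0 1 := by
      simpa using (hbase.comp_sub_left 1).symm
    have hmul := hcomp.continuousOn_mul hcont_aux
    apply hmul.congr
    intro z hz
    beta_reduce
    rw [Set.uIoc_of_le (by norm_num : (0:ℝ) ≤ 1)] at hz
    have hz1 : (0:ℝ) ≤ 1 - z := by linarith [hz.2]
    rw [Real.rpow_neg hz1, ← Real.sqrt_eq_rpow]
    ring
  -- continuity of F
  have hFc : Continuous F := by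
    apply Continuous.sub
    · exact continuous_const.mul ((Real.continuous_sqrt.comp (by continuity)).mul
        (Real.continuous_sqrt.comp (by continuity)))
    · exact continuous_const.mul (Real.continuous_arsinh.comp
        ((continuous_const.mul (Real.continuous_sqrt.comp (by continuity))).div_const s2))
  have hI : (∫ z in (0:ℝ)..1, z / (Real.sqrt (1 - z) * Real.sqrt (1 - z + lam * (1 + z))))
      = F 1 - F 0 :=
    intervalIntegral.integral_eq_sub_of_hasDeriv_right_of_le (by norm_num)
      hFc.continuousOn (fun x hx => (hderiv x hx).hasDerivWithinAt) hint
  have hF1 : F 1 = 0 := by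
    simp only [hF]
    norm_num [Real.arsinh_zero]
  have hF0 : F 0 = sa / (1 - lam) - (2 / ((1 - lam) * sb)) * Real.arsinh (sb / s2) := by
    simp only [hF]
    norm_num [hsa_def]
    ring_nf
  -- log identity
  have hm : Real.sqrt (1 - lam ^ 2) = sa * sb := by
    rw [hsa_def, hsb_def, ← Real.sqrt_mul (by linarith : (0:ℝ) ≤ 1 + lam)]
    congr 1; ring
  have hy : Real.sqrt (1 + (sb / s2) ^ 2) = sa / s2 := by
    have h2 : 1 + (sb / s2) ^ 2 = (sa / s2) ^ 2 := by
      rw [div_pow, div_pow, hsb_sq, hsa_sq, hs2_sq]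
      field_simp; ring
    rw [h2, Real.sqrt_sq (by positivity)]
  have hlog : Real.log ((1 + sa * sb) / lam) = 2 * Real.arsinh (sb / s2) := by
    rw [Real.arsinh, hy]
    have hsq : (sb / s2 + sa / s2) ^ 2 = (1 + sa * sb) / lam := by
      have : (sb / s2 + sa / s2) ^ 2 = (sb ^ 2 + 2 * (sa * sb) + sa ^ 2) / s2 ^ 2 := by
        field_simp; ring
      rw [this, hsb_sq, hsa_sq, hs2_sq]
      field_simp; ring
    rw [← hsq, Real.log_pow]
    norm_num
  -- rpow identities
  have hr1 : (1 + lam) ^ ((3:ℝ)/2) = (1 + lam) * sa := by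
    rw [show (3:ℝ)/2 = 1 + 1/2 by norm_num, Real.rpow_add (by linarith), Real.rpow_one,
      hsa_def, Real.sqrt_eq_rpow]
  have hr2 : (1 - lam ^ 2) ^ ((3:ℝ)/2) = (1 - lam ^ 2) * (sa * sb) := by
    rw [show (3:ℝ)/2 = 1 + 1/2 by norm_num, Real.rpow_add (by nlinarith), Real.rpow_one,
      ← hm, Real.sqrt_eq_rpow]
  rw [hI, hF1, hF0, hr1, hr2, hm, hlog]
  have h1l : (1:ℝ) - lam ≠ 0 := by intro h; linarith [h]
  have h1l2 : (1:ℝ) - lam ^ 2 ≠ 0 := by nlinarith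
  field_simp
  ring
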